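/- (Proposition 1) Let 0 < α < 1, let n ≥ 1 be a natural number, and let u, h : [x₁, x₂] → ℝ be continuous and strictly positive. Then the function ε ↦ ∫_{x₁}^{x₂} ∫_{−u(x)/h(x)}^{ε} u(x)^(n−nα)·h(x)^(nα)·(t + u(x)/h(x))^(nα)·(ε−t)^(−α) dt dx is differentiable at ε = 0, and (1/Γ(1−α)) times its derivative at ε = 0 equals (Γ(nα+1)/Γ((n−1)α+1)) · ∫_{x₁}^{x₂} u(x)^(n−α)·h(x)^α dx, which can be written as λ(α,n) · ∫_{x₁}^{x₂} (Γ(n+1)/Γ(n+1−α))·u(x)^(n−α)·h(x)^α dx with λ(α,n) = Γ(nα+1)·Γ(n+1−α) / (Γ((n−1)α+1)·Γ(n+1)). (This is the fractional Gateaux variation δ^α F[u] of the functional F[u] = ∫_{x₁}^{x₂} u(x)^n dx, since F[u^(1−α)·(u+εh)^α] = ∫_{x₁}^{x₂} u^(n−nα)·h^(nα)·(ε + u/h)^(nα) dx.) -/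

import Mathlib

open intervalIntegral MeasureTheory Set

lemma realBeta (p q : ℝ) (hp : -1 < p) (hq : -1 < q) :
    ∫ x in (0:ℝ)..1, x ^ p * (1 - x) ^ q
      = Real.Gamma (p + 1) * Real.Gamma (q + 1) / Real.Gamma (p + q + 2) := by
  have h1 : Complex.betaIntegral (p + 1) (q + 1)
      = ((∫ x in (0:ℝ)..1, x ^ p * (1 - x) ^ q : ℝ) : ℂ) := by
    rw [Complex.betaIntegral, ← intervalIntegral.integral_ofReal]
    refine intervalIntegral.integral_congr fun x hx => ?_
    rw [Set.uIcc_of_le (by norm_num : (0:ℝ) ≤ 1)] at hx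
    rw [Complex.ofReal_mul, Complex.ofReal_cpow hx.1,
      Complex.ofReal_cpow (by linarith [hx.2] : (0:ℝ) ≤ 1 - x)]
    push_cast
    ring_nf
  have h2 := Complex.Gamma_mul_Gamma_eq_betaIntegral
      (s := (p:ℂ) + 1) (t := (q:ℂ) + 1) (by simp; linarith) (by simp; linarith)
  rw [h1] at h2
  have h3 : ((p:ℂ) + 1) + ((q:ℂ) + 1) = ((p + q + 2 : ℝ) : ℂ) := by push_cast; ring
  rw [h3] at h2
  have h4 : ((p:ℂ) + 1) = ((p + 1 : ℝ) : ℂ) := by push_cast; ring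
  have h5 : ((q:ℂ) + 1) = ((q + 1 : ℝ) : ℂ) := by push_cast; ring
  rw [h4, h5, Complex.Gamma_ofReal, Complex.Gamma_ofReal, Complex.Gamma_ofReal] at h2
  have hne : Real.Gamma (p + q + 2) ≠ 0 := (Real.Gamma_pos_of_pos (by linarith)).ne'
  field_simp
  have := congrArg Complex.re h2
  push_cast at this
  simpa [mul_comm] using this.symm

lemma realBeta_scaled (a b p q : ℝ) (hab : a < b) (hp : -1 < p) (hq : -1 < q) :
    ∫ t in a..b, (t - a) ^ p * (b - t) ^ q
      = (b - a) ^ (p + q + 1) *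
          (Real.Gamma (p + 1) * Real.Gamma (q + 1) / Real.Gamma (p + q + 2)) := by
  have hba : (0:ℝ) < b - a := by linarith
  have hsub := intervalIntegral.integral_comp_mul_add
    (a := (0:ℝ)) (b := 1) (f := fun t => (t - a) ^ p * (b - t) ^ q) hba.ne' a
  simp only [mul_zero, zero_add, mul_one] at hsub
  have hend : b - a + a = b := by ring
  rw [hend] at hsub
  have hLHS : ∫ x in (0:ℝ)..1, ((b - a) * x + a - a) ^ p * (b - ((b - a) * x + a)) ^ q
      = (b - a) ^ p * (b - a) ^ q * ∫ x in (0:ℝ)..1, x ^ p * (1 - x) ^ q := by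
    rw [← intervalIntegral.integral_const_mul]
    refine intervalIntegral.integral_congr fun x hx => ?_
    rw [Set.uIcc_of_le (by norm_num : (0:ℝ) ≤ 1)] at hx
    have e1 : (b - a) * x + a - a = (b - a) * x := by ring
    have e2 : b - ((b - a) * x + a) = (b - a) * (1 - x) := by ring
    rw [e1, e2, Real.mul_rpow hba.le hx.1, Real.mul_rpow hba.le (by linarith [hx.2])]
    ring
  rw [hLHS] at hsub
  have := hsub.symm
  rw [smul_eq_mul] at this
  have h2 : ∫ t in a..b, (t - a) ^ p * (b - t) ^ q
      = (b - a) * ((b - a) ^ p * (b - a) ^ q * ∫ x in (0:ℝ)..1, x ^ p * (1 - x) ^ q) := by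
    field_simp at this ⊢
    linarith [this]
  rw [h2, realBeta p q hp hq]
  rw [show p + q + 1 = 1 + p + q by ring, Real.rpow_add hba, Real.rpow_add hba, Real.rpow_one]
  ring

theorem stmt_12 (α x₁ x₂ : ℝ) (hα0 : 0 < α) (hα1 : α < 1) (h12 : x₁ ≤ x₂)
    (n : ℕ) (hn : 1 ≤ n) (u h : ℝ → ℝ)
    (hu : ContinuousOn u (Set.Icc x₁ x₂)) (hh : ContinuousOn h (Set.Icc x₁ x₂))
    (hupos : ∀ x ∈ Set.Icc x₁ x₂, 0 < u x) (hhpos : ∀ x ∈ Set.Icc x₁ x₂, 0 < h x) :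
    DifferentiableAt ℝ
      (fun s : ℝ => ∫ x in x₁..x₂, ∫ t in (-(u x / h x))..s,
        u x ^ ((n : ℝ) - n * α) * h x ^ ((n : ℝ) * α) *
          (t + u x / h x) ^ ((n : ℝ) * α) * (s - t) ^ (-α)) 0 ∧
    (1 / Real.Gamma (1 - α)) *
        deriv (fun s : ℝ => ∫ x in x₁..x₂, ∫ t in (-(u x / h x))..s,
          u x ^ ((n : ℝ) - n * α) * h x ^ ((n : ℝ) * α) *
            (t + u x / h x) ^ ((n : ℝ) * α) * (s - t) ^ (-α)) 0
      = (Real.Gamma ((n : ℝ) * α + 1) / Real.Gamma (((n : ℝ) - 1) * α + 1)) *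
          ∫ x in x₁..x₂, u x ^ ((n : ℝ) - α) * h x ^ α ∧
    (1 / Real.Gamma (1 - α)) *
        deriv (fun s : ℝ => ∫ x in x₁..x₂, ∫ t in (-(u x / h x))..s,
          u x ^ ((n : ℝ) - n * α) * h x ^ ((n : ℝ) * α) *
            (t + u x / h x) ^ ((n : ℝ) * α) * (s - t) ^ (-α)) 0
      = (Real.Gamma ((n : ℝ) * α + 1) * Real.Gamma ((n : ℝ) + 1 - α) /
            (Real.Gamma (((n : ℝ) - 1) * α + 1) * Real.Gamma ((n : ℝ) + 1))) *
          ∫ x in x₁..x₂,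
            (Real.Gamma ((n : ℝ) + 1) / Real.Gamma ((n : ℝ) + 1 - α)) *
              u x ^ ((n : ℝ) - α) * h x ^ α := by
  have hn1 : (1:ℝ) ≤ (n:ℝ) := by exact_mod_cast hn
  have hP0 : 0 < (n:ℝ) * α := mul_pos (by linarith) hα0
  have hnaa : 0 ≤ (n:ℝ) * α - α := by nlinarith
  have hγpos : 0 < (n:ℝ) * α + -α + 1 := by linarith
  have hB0 : 0 < Real.Gamma ((n:ℝ)*α + 1) * Real.Gamma (-α + 1) /
      Real.Gamma ((n:ℝ)*α + -α + 2) :=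
    div_pos (mul_pos (Real.Gamma_pos_of_pos (by linarith)) (Real.Gamma_pos_of_pos (by linarith)))
      (Real.Gamma_pos_of_pos (by linarith))
  have hIcc : (Set.Icc x₁ x₂).Nonempty := Set.nonempty_Icc.2 h12
  have hccont : ContinuousOn (fun x => u x / h x) (Set.Icc x₁ x₂) :=
    hu.div hh fun x hx => (hhpos x hx).ne'
  obtain ⟨x₀, hx₀, hminOn⟩ := isCompact_Icc.exists_isMinOn hIcc hccont
  have hm0 : 0 < u x₀ / h x₀ := div_pos (hupos _ hx₀) (hhpos _ hx₀)
  set m : ℝ := u x₀ / h x₀ with hmdef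
  have hmle : ∀ x ∈ Set.Icc x₁ x₂, m ≤ u x / h x := fun x hx => (isMinOn_iff.mp hminOn) x hx
  have hsubI : Set.uIoc x₁ x₂ ⊆ Set.Icc x₁ x₂ := by
    rw [← Set.uIcc_of_le h12]; exact Set.uIoc_subset_uIcc
  -- continuity of the pieces
  have hgcont : ContinuousOn (fun x => u x ^ ((n:ℝ) - n * α) * h x ^ ((n:ℝ) * α))
      (Set.Icc x₁ x₂) :=
    (hu.rpow_const fun x hx => Or.inl (hupos x hx).ne').mul
      (hh.rpow_const fun x hx => Or.inl (hhpos x hx).ne')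
  -- inner integral evaluation: F =ᶠ[𝓝 0] G
  have hFG : (fun s : ℝ => ∫ x in x₁..x₂, ∫ t in (-(u x / h x))..s,
        u x ^ ((n : ℝ) - n * α) * h x ^ ((n : ℝ) * α) *
          (t + u x / h x) ^ ((n : ℝ) * α) * (s - t) ^ (-α))
      =ᶠ[nhds 0] (fun s : ℝ => ∫ x in x₁..x₂,
        u x ^ ((n : ℝ) - n * α) * h x ^ ((n : ℝ) * α) *
          ((s + u x / h x) ^ ((n:ℝ)*α + -α + 1) *
            (Real.Gamma ((n:ℝ)*α + 1) * Real.Gamma (-α + 1) /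
              Real.Gamma ((n:ℝ)*α + -α + 2)))) := by
    filter_upwards [Metric.ball_mem_nhds (0:ℝ) hm0] with s hs
    have hs' : |s| < m := by simpa [Real.dist_eq] using Metric.mem_ball.mp hs
    refine intervalIntegral.integral_congr fun x hx => ?_
    rw [Set.uIcc_of_le h12] at hx
    have hlt : -(u x / h x) < s := by
      have := abs_lt.mp hs'
      have := hmle x hx
      linarith
    have hb := realBeta_scaled (-(u x / h x)) s ((n:ℝ)*α) (-α) hlt (by linarith) (by linarith)
    simp only [sub_neg_eq_add] at hb
    calc (∫ t in (-(u x / h x))..s,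
            u x ^ ((n : ℝ) - n * α) * h x ^ ((n : ℝ) * α) *
              (t + u x / h x) ^ ((n : ℝ) * α) * (s - t) ^ (-α))
        = ∫ t in (-(u x / h x))..s,
            (u x ^ ((n : ℝ) - n * α) * h x ^ ((n : ℝ) * α)) *
              ((t + u x / h x) ^ ((n : ℝ) * α) * (s - t) ^ (-α)) :=
          intervalIntegral.integral_congr fun t _ => by ring
      _ = (u x ^ ((n : ℝ) - n * α) * h x ^ ((n : ℝ) * α)) *
            ∫ t in (-(u x / h x))..s,
              (t + u x / h x) ^ ((n : ℝ) * α) * (s - t) ^ (-α) :=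
          intervalIntegral.integral_const_mul _ _
      _ = _ := by rw [hb]
  -- differentiation under the integral sign for G
  have hcontF : ∀ s : ℝ, ContinuousOn (fun x =>
      u x ^ ((n : ℝ) - n * α) * h x ^ ((n : ℝ) * α) *
        ((s + u x / h x) ^ ((n:ℝ)*α + -α + 1) *
          (Real.Gamma ((n:ℝ)*α + 1) * Real.Gamma (-α + 1) /
            Real.Gamma ((n:ℝ)*α + -α + 2)))) (Set.Icc x₁ x₂) := by
    intro s
    exact hgcont.mul
      ((((continuousOn_const.add hccont).rpow_const
          fun x hx => Or.inr (by linarith)).mul continuousOn_const))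
  have hcontF' : ∀ s : ℝ, ContinuousOn (fun x =>
      u x ^ ((n : ℝ) - n * α) * h x ^ ((n : ℝ) * α) *
        (((n:ℝ)*α + -α + 1) * (s + u x / h x) ^ ((n:ℝ)*α + -α + 1 - 1) *
          (Real.Gamma ((n:ℝ)*α + 1) * Real.Gamma (-α + 1) /
            Real.Gamma ((n:ℝ)*α + -α + 2)))) (Set.Icc x₁ x₂) := by
    intro s
    exact hgcont.mul
      (((continuousOn_const.mul ((continuousOn_const.add hccont).rpow_const
          fun x hx => Or.inr (by linarith))).mul continuousOn_const))
  have hder := intervalIntegral.hasDerivAt_integral_of_dominated_loc_of_deriv_le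
    (μ := volume) (a := x₁) (b := x₂) (x₀ := (0:ℝ)) (s := Metric.ball (0:ℝ) (m/2))
    (F := fun s x =>
      u x ^ ((n : ℝ) - n * α) * h x ^ ((n : ℝ) * α) *
        ((s + u x / h x) ^ ((n:ℝ)*α + -α + 1) *
          (Real.Gamma ((n:ℝ)*α + 1) * Real.Gamma (-α + 1) /
            Real.Gamma ((n:ℝ)*α + -α + 2))))
    (F' := fun s x =>
      u x ^ ((n : ℝ) - n * α) * h x ^ ((n : ℝ) * α) *
        (((n:ℝ)*α + -α + 1) * (s + u x / h x) ^ ((n:ℝ)*α + -α + 1 - 1) *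
          (Real.Gamma ((n:ℝ)*α + 1) * Real.Gamma (-α + 1) /
            Real.Gamma ((n:ℝ)*α + -α + 2))))
    (bound := fun x =>
      u x ^ ((n : ℝ) - n * α) * h x ^ ((n : ℝ) * α) *
        (((n:ℝ)*α + -α + 1) * (m/2 + u x / h x) ^ ((n:ℝ)*α + -α + 1 - 1) *
          (Real.Gamma ((n:ℝ)*α + 1) * Real.Gamma (-α + 1) /
            Real.Gamma ((n:ℝ)*α + -α + 2))))
    (Metric.ball_mem_nhds (0:ℝ) (half_pos hm0))
    (Filter.Eventually.of_forall fun s =>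
      (((hcontF s).mono hsubI).aestronglyMeasurable measurableSet_uIoc))
    (by
      apply ContinuousOn.intervalIntegrable
      rw [Set.uIcc_of_le h12]; exact hcontF 0)
    (((hcontF' 0).mono hsubI).aestronglyMeasurable measurableSet_uIoc)
    (Filter.Eventually.of_forall fun x hx s hs => by
      have hx' := hsubI hx
      have hcx := hmle x hx'
      have hs' : |s| < m/2 := by simpa [Real.dist_eq] using Metric.mem_ball.mp hs
      obtain ⟨hs1, hs2⟩ := abs_lt.mp hs'
      have hpos : 0 < s + u x / h x := by linarith
      have hgn : 0 ≤ u x ^ ((n : ℝ) - n * α) * h x ^ ((n : ℝ) * α) :=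
        mul_nonneg (Real.rpow_nonneg (hupos x hx').le _) (Real.rpow_nonneg (hhpos x hx').le _)
      rw [Real.norm_eq_abs, abs_of_nonneg (mul_nonneg hgn (mul_nonneg
        (mul_nonneg hγpos.le (Real.rpow_nonneg hpos.le _)) hB0.le))]
      refine mul_le_mul_of_nonneg_left ?_ hgn
      refine mul_le_mul_of_nonneg_right (mul_le_mul_of_nonneg_left ?_ hγpos.le) hB0.le
      exact Real.rpow_le_rpow hpos.le (by linarith) (by linarith))
    (by
      apply ContinuousOn.intervalIntegrable
      rw [Set.uIcc_of_le h12]; exact hcontF' (m/2))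
    (Filter.Eventually.of_forall fun x hx s hs => by
      have hx' := hsubI hx
      have hcx := hmle x hx'
      have hs' : |s| < m/2 := by simpa [Real.dist_eq] using Metric.mem_ball.mp hs
      obtain ⟨hs1, hs2⟩ := abs_lt.mp hs'
      have hpos : 0 < s + u x / h x := by linarith
      have hd : HasDerivAt (fun s : ℝ => (s + u x / h x) ^ ((n:ℝ)*α + -α + 1))
          (1 * ((n:ℝ)*α + -α + 1) * (s + u x / h x) ^ ((n:ℝ)*α + -α + 1 - 1)) s :=
        ((hasDerivAt_id s).add_const _).rpow_const (Or.inl hpos.ne')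
      have hd2 := (hd.mul_const (Real.Gamma ((n:ℝ)*α + 1) * Real.Gamma (-α + 1) /
            Real.Gamma ((n:ℝ)*α + -α + 2))).const_mul
        (u x ^ ((n : ℝ) - n * α) * h x ^ ((n : ℝ) * α))
      convert hd2 using 1
      · rfl
      ring)
  -- value of the derivative integral
  have hDval : (∫ x in x₁..x₂,
        u x ^ ((n : ℝ) - n * α) * h x ^ ((n : ℝ) * α) *
          (((n:ℝ)*α + -α + 1) * ((0:ℝ) + u x / h x) ^ ((n:ℝ)*α + -α + 1 - 1) *
            (Real.Gamma ((n:ℝ)*α + 1) * Real.Gamma (-α + 1) /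
              Real.Gamma ((n:ℝ)*α + -α + 2))))
      = (((n:ℝ)*α + -α + 1) * (Real.Gamma ((n:ℝ)*α + 1) * Real.Gamma (-α + 1) /
            Real.Gamma ((n:ℝ)*α + -α + 2))) *
          ∫ x in x₁..x₂, u x ^ ((n : ℝ) - α) * h x ^ α := by
    rw [← intervalIntegral.integral_const_mul]
    refine intervalIntegral.integral_congr fun x hx => ?_
    rw [Set.uIcc_of_le h12] at hx
    have hux := hupos x hx
    have hhx := hhpos x hx
    have e1 : ((0:ℝ) + u x / h x) ^ ((n:ℝ)*α + -α + 1 - 1)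
        = u x ^ ((n:ℝ)*α - α) / h x ^ ((n:ℝ)*α - α) := by
      rw [zero_add, show (n:ℝ)*α + -α + 1 - 1 = (n:ℝ)*α - α by ring,
        Real.div_rpow hux.le hhx.le]
    have e2 : u x ^ ((n:ℝ) - n*α) * u x ^ ((n:ℝ)*α - α) = u x ^ ((n:ℝ) - α) := by
      rw [← Real.rpow_add hux]; ring_nf
    have e3 : h x ^ ((n:ℝ)*α) / h x ^ ((n:ℝ)*α - α) = h x ^ α := by
      rw [← Real.rpow_sub hhx]; ring_nf
    calc u x ^ ((n : ℝ) - n * α) * h x ^ ((n : ℝ) * α) *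
          (((n:ℝ)*α + -α + 1) * ((0:ℝ) + u x / h x) ^ ((n:ℝ)*α + -α + 1 - 1) *
            (Real.Gamma ((n:ℝ)*α + 1) * Real.Gamma (-α + 1) /
              Real.Gamma ((n:ℝ)*α + -α + 2)))
        = (((n:ℝ)*α + -α + 1) * (Real.Gamma ((n:ℝ)*α + 1) * Real.Gamma (-α + 1) /
            Real.Gamma ((n:ℝ)*α + -α + 2))) *
            ((u x ^ ((n:ℝ) - n*α) * u x ^ ((n:ℝ)*α - α)) *
              (h x ^ ((n:ℝ)*α) / h x ^ ((n:ℝ)*α - α))) := by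
          rw [e1]; ring
      _ = _ := by rw [e2, e3]
  have hderivF : deriv (fun s : ℝ => ∫ x in x₁..x₂, ∫ t in (-(u x / h x))..s,
        u x ^ ((n : ℝ) - n * α) * h x ^ ((n : ℝ) * α) *
          (t + u x / h x) ^ ((n : ℝ) * α) * (s - t) ^ (-α)) 0
      = (((n:ℝ)*α + -α + 1) * (Real.Gamma ((n:ℝ)*α + 1) * Real.Gamma (-α + 1) /
            Real.Gamma ((n:ℝ)*α + -α + 2))) *
          ∫ x in x₁..x₂, u x ^ ((n : ℝ) - α) * h x ^ α := by
    rw [hFG.deriv_eq, hder.2.deriv, hDval]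
  -- Gamma bookkeeping
  have hG2 : Real.Gamma (-α + 1) = Real.Gamma (1 - α) := by ring_nf
  have hG3 : Real.Gamma ((n:ℝ)*α + -α + 2)
      = ((n:ℝ)*α - α + 1) * Real.Gamma ((n:ℝ)*α - α + 1) := by
    rw [show (n:ℝ)*α + -α + 2 = ((n:ℝ)*α - α + 1) + 1 by ring,
      Real.Gamma_add_one (by positivity : ((n:ℝ)*α - α + 1) ≠ 0)]
  have hG4 : Real.Gamma (((n:ℝ) - 1)*α + 1) = Real.Gamma ((n:ℝ)*α - α + 1) := by ring_nf
  have hΓ1 : Real.Gamma (1 - α) ≠ 0 := (Real.Gamma_pos_of_pos (by linarith)).ne'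
  have hΓγ : Real.Gamma ((n:ℝ)*α - α + 1) ≠ 0 :=
    (Real.Gamma_pos_of_pos (by linarith)).ne'
  have hcoef : (1 / Real.Gamma (1 - α)) *
        (((n:ℝ)*α + -α + 1) * (Real.Gamma ((n:ℝ)*α + 1) * Real.Gamma (-α + 1) /
          Real.Gamma ((n:ℝ)*α + -α + 2)))
      = Real.Gamma ((n : ℝ) * α + 1) / Real.Gamma (((n : ℝ) - 1) * α + 1) := by
    rw [hG2, hG3, hG4]
    have hne : ((n:ℝ)*α - α + 1) ≠ 0 := by positivity
    field_simp
    rw [← sub_eq_add_neg, div_mul_cancel_left₀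
      (by nlinarith : (0:ℝ) < α * ((n:ℝ) - 1) + 1).ne', one_div]
  have hpart2 : (1 / Real.Gamma (1 - α)) *
        deriv (fun s : ℝ => ∫ x in x₁..x₂, ∫ t in (-(u x / h x))..s,
          u x ^ ((n : ℝ) - n * α) * h x ^ ((n : ℝ) * α) *
            (t + u x / h x) ^ ((n : ℝ) * α) * (s - t) ^ (-α)) 0
      = (Real.Gamma ((n : ℝ) * α + 1) / Real.Gamma (((n : ℝ) - 1) * α + 1)) *
          ∫ x in x₁..x₂, u x ^ ((n : ℝ) - α) * h x ^ α := by
    rw [hderivF, ← mul_assoc, hcoef]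
  refine ⟨hFG.differentiableAt_iff.mpr hder.2.differentiableAt, hpart2, ?_⟩
  rw [hpart2]
  have hK : ∫ x in x₁..x₂,
        (Real.Gamma ((n : ℝ) + 1) / Real.Gamma ((n : ℝ) + 1 - α)) *
          u x ^ ((n : ℝ) - α) * h x ^ α
      = (Real.Gamma ((n : ℝ) + 1) / Real.Gamma ((n : ℝ) + 1 - α)) *
          ∫ x in x₁..x₂, u x ^ ((n : ℝ) - α) * h x ^ α := by
    rw [← intervalIntegral.integral_const_mul]
    exact intervalIntegral.integral_congr fun x _ => by ring
  rw [hK]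
  have hΓ5 : Real.Gamma ((n:ℝ) + 1 - α) ≠ 0 :=
    (Real.Gamma_pos_of_pos (by linarith)).ne'
  have hΓ6 : Real.Gamma ((n:ℝ) + 1) ≠ 0 :=
    (Real.Gamma_pos_of_pos (by linarith)).ne'
  have hΓ2 : Real.Gamma (((n:ℝ) - 1) * α + 1) ≠ 0 := by rw [hG4]; exact hΓγ
  have hcoef2 : (Real.Gamma ((n : ℝ) * α + 1) * Real.Gamma ((n : ℝ) + 1 - α) /
        (Real.Gamma (((n : ℝ) - 1) * α + 1) * Real.Gamma ((n : ℝ) + 1))) *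
      (Real.Gamma ((n : ℝ) + 1) / Real.Gamma ((n : ℝ) + 1 - α))
      = Real.Gamma ((n : ℝ) * α + 1) / Real.Gamma (((n : ℝ) - 1) * α + 1) := by
    field_simp
  rw [← mul_assoc, hcoef2]
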